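/- Let v_1, …, v_5 ∈ ℂ^3 satisfy det(v_2, v_3, v_4) = 1 and det(v_3, v_4, v_5) = 1. Then det(v_1, v_3, v_4)·det(v_2, v_4, v_5) − det(v_1, v_2, v_4) = det(v_1, v_4, v_5). -/
import Mathlib


/-- The determinant of the `3 × 3` matrix whose columns are `u 0, u 1, u 2`. -/
noncomputable def cdet (u : Fin 3 → Fin 3 → ℂ) : ℂ :=
  (Matrix.of fun i j => u j i).det

/-- The identity `P_{1,3,4} P_{2,4,5} − P_{1,2,4} = P_{1,4,5}` from
Section 6 of the paper, given `det(v_2,v_3,v_4) = det(v_3,v_4,v_5) = 1`. -/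
theorem stmt_12 (v1 v2 v3 v4 v5 : Fin 3 → ℂ)
    (h1 : cdet ![v2, v3, v4] = 1) (h2 : cdet ![v3, v4, v5] = 1) :
    cdet ![v1, v3, v4] * cdet ![v2, v4, v5] - cdet ![v1, v2, v4] = cdet ![v1, v4, v5] := by
  simp only [cdet, Matrix.det_fin_three, Matrix.of_apply, Matrix.cons_val', Matrix.cons_val_zero,
    Matrix.cons_val_one, Matrix.head_cons, Matrix.head_fin_const, Matrix.cons_val_fin_one,
    Matrix.empty_val', Matrix.cons_val_two, Matrix.tail_cons] at *
  linear_combination (v1 0 * v2 1 * v4 2 - v1 0 * v2 2 * v4 1 - v1 1 * v2 0 * v4 2 +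
      v1 1 * v2 2 * v4 0 + v1 2 * v2 0 * v4 1 - v1 2 * v2 1 * v4 0) * h2 +
    (v1 0 * v4 1 * v5 2 - v1 0 * v4 2 * v5 1 - v1 1 * v4 0 * v5 2 +
      v1 1 * v4 2 * v5 0 + v1 2 * v4 0 * v5 1 - v1 2 * v4 1 * v5 0) * h1
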